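/- arXiv:1402.0277 — 5 statements merged into one kernel-verified Lean document; each statement's English description precedes it below -/
import Mathlib

section
/- Let F be the uniform distribution function on (0,1). With norming constants a_n = 1/n, b_n = 1, the density of the normalized maximum is g_n(x) = (1 + x/n)^{n-1} for -n < x < 0. Then the Shannon entropy H(g_n) increases with n and converges to H(ψ_1) = 1, the entropy of the Weibull law with α = 1 (density ψ_1(x) = e^{x} for x < 0), and the relative entropy D(g_n‖ψ_1) converges to 0 as n → ∞. -/
open MeasureTheory Real Filter

lemma aux_K (k : ℕ) : ∫ u in (0:ℝ)..1, u^k * Real.log (u^k) = -(k:ℝ)/((k:ℝ)+1)^2 := by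
  set c : ℝ := (k:ℝ)/((k:ℝ)+1)^2 with hc
  set F : ℝ → ℝ := fun u => c * (u^(k+1) * Real.log (u^(k+1)) - u^(k+1)) with hF
  have hFeq : F = fun u => c * (u^(k+1) * (((k:ℝ)+1) * Real.log u) - u^(k+1)) := by
    funext u
    show c * (u^(k+1) * Real.log (u^(k+1)) - u^(k+1)) = _
    rw [Real.log_pow]
    push_cast
    ring
  have hcont : Continuous F := by
    apply Continuous.mul continuous_const
    exact (Real.continuous_mul_log.comp (continuous_pow (k+1))).sub (continuous_pow (k+1))
  have hderiv : ∀ x ∈ Set.Ioo (0:ℝ) 1, HasDerivAt F (x^k * Real.log (x^k)) x := by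
    intro x hx
    have hx0 : x ≠ 0 := ne_of_gt hx.1
    have hd : HasDerivAt (fun u : ℝ => c * (u^(k+1) * (((k:ℝ)+1) * Real.log u) - u^(k+1)))
        (c * ((((k:ℝ)+1) * x^k) * (((k:ℝ)+1) * Real.log x)
          + x^(k+1) * (((k:ℝ)+1) * x⁻¹) - ((k:ℝ)+1) * x^k)) x := by
      have h1 : HasDerivAt (fun u : ℝ => u^(k+1)) (((k:ℝ)+1) * x^k) x := by
        simpa using hasDerivAt_pow (k+1) x
      have h2 : HasDerivAt (fun u : ℝ => ((k:ℝ)+1) * Real.log u) (((k:ℝ)+1) * x⁻¹) x :=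
        (Real.hasDerivAt_log hx0).const_mul _
      exact ((h1.mul h2).sub h1).const_mul c
    rw [hFeq]
    convert hd using 1
    rw [Real.log_pow]
    have hk1 : ((k:ℝ)+1) ≠ 0 := by positivity
    rw [hc]
    field_simp
    ring
  have := intervalIntegral.integral_eq_sub_of_hasDerivAt_of_le zero_le_one
    hcont.continuousOn hderiv
    (((Real.continuous_mul_log.comp (continuous_pow k))).intervalIntegrable 0 1)
  rw [this]
  simp [hF, hc]
  ring

lemma aux_subst (f : ℝ → ℝ) (n : ℕ) (hn : 0 < n) :
    ∫ x in (-(n:ℝ))..0, f (1 + x/n) = n * ∫ u in (0:ℝ)..1, f u := by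
  have hn0 : (n:ℝ) ≠ 0 := Nat.cast_ne_zero.2 hn.ne'
  have h1 : ∫ x in (-(n:ℝ))..0, f (1 + x/n)
      = (n:ℝ) • ∫ y in (-(n:ℝ))/n..(0:ℝ)/n, f (1 + y) :=
    intervalIntegral.integral_comp_div (fun y => f (1 + y)) hn0
  rw [h1, neg_div, div_self hn0, zero_div,
    intervalIntegral.integral_comp_add_left f 1]
  norm_num

lemma aux_int1 (m : ℕ) :
    ∫ x in (-((m+1:ℕ):ℝ))..0, (1 + x/((m+1:ℕ):ℝ))^m * Real.log ((1 + x/((m+1:ℕ):ℝ))^m)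
      = -(m:ℝ)/((m:ℝ)+1) := by
  rw [aux_subst (fun u => u^m * Real.log (u^m)) (m+1) (Nat.succ_pos m), aux_K m]
  have : ((m:ℝ)+1) ≠ 0 := by positivity
  push_cast
  field_simp

lemma aux_int2 (m : ℕ) :
    ∫ x in (-((m+1:ℕ):ℝ))..0, x * (1 + x/((m+1:ℕ):ℝ))^m = -((m:ℝ)+1)/((m:ℝ)+2) := by
  have hn0 : ((m+1:ℕ):ℝ) ≠ 0 := by positivity
  have hfun : (fun x : ℝ => x * (1 + x/((m+1:ℕ):ℝ))^m)
      = fun x => (fun u => ((m+1:ℕ):ℝ) * (u - 1) * u^m) (1 + x/((m+1:ℕ):ℝ)) := by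
    funext x
    simp only
    rw [add_sub_cancel_left, mul_div_cancel₀ _ hn0]
  calc ∫ x in (-((m+1:ℕ):ℝ))..0, x * (1 + x/((m+1:ℕ):ℝ))^m
      = ∫ x in (-((m+1:ℕ):ℝ))..0, (fun u => ((m+1:ℕ):ℝ) * (u - 1) * u^m) (1 + x/((m+1:ℕ):ℝ)) := by
        rw [hfun]
    _ = ((m+1:ℕ):ℝ) * ∫ u in (0:ℝ)..1, ((m+1:ℕ):ℝ) * (u - 1) * u^m :=
        aux_subst (fun u => ((m+1:ℕ):ℝ) * (u - 1) * u^m) (m+1) (Nat.succ_pos m)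
    _ = -((m:ℝ)+1)/((m:ℝ)+2) := by
        have h1 : (fun u : ℝ => ((m+1:ℕ):ℝ) * (u - 1) * u^m)
            = fun u : ℝ => ((m+1:ℕ):ℝ) * (u^(m+1) - u^m) := by
          funext u; ring
        rw [h1, intervalIntegral.integral_const_mul,
          intervalIntegral.integral_sub ((continuous_pow (m+1)).intervalIntegrable 0 1)
            ((continuous_pow m).intervalIntegrable 0 1),
          integral_pow, integral_pow]
        have h2 : ((m:ℝ)+1) ≠ 0 := by positivity
        have h3 : ((m:ℝ)+2) ≠ 0 := by positivity
        push_cast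
        field_simp
        ring

/-- For the uniform distribution on `(0,1)` with norming constants
`a_n = 1/n`, `b_n = 1`, the density of the normalized maximum is
`g_n x = (1 + x/n)^(n-1)` for `-n < x < 0`. The Shannon entropy `H (g n)` increases
with `n` and converges to `H(ψ₁) = 1`, the entropy of the Weibull law with `α = 1`
(density `ψ₁ x = exp x` for `x < 0`), and the relative entropy `D (g n ‖ ψ₁)`
converges to `0`. -/
theorem entropy_max_uniform
    (g : ℕ → ℝ → ℝ)
    (hg : ∀ n x, g n x =
      if -(n : ℝ) < x ∧ x < 0 then (1 + x / n) ^ (n - 1) else 0)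
    (ψ : ℝ → ℝ)
    (hψ : ∀ x, ψ x = if x < 0 then Real.exp x else 0)
    (H : (ℝ → ℝ) → ℝ)
    (hH : ∀ p, H p = -∫ x in {x | 0 < p x}, p x * Real.log (p x))
    (D : (ℝ → ℝ) → (ℝ → ℝ) → ℝ)
    (hD : ∀ p q, D p q = ∫ x in {x | 0 < p x}, p x * Real.log (p x / q x)) :
    (∀ n, 1 ≤ n → H (g n) ≤ H (g (n + 1))) ∧
    Tendsto (fun n => H (g n)) atTop (nhds 1) ∧
    Tendsto (fun n => D (g n) ψ) atTop (nhds 0) := by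
  -- positivity of 1 + x/n on the interval
  have hpos : ∀ (n : ℕ), 0 < n → ∀ x : ℝ, -(n:ℝ) < x → x < 0 → 0 < 1 + x / n := by
    intro n hn x h1 h2
    have hn' : (0:ℝ) < n := by exact_mod_cast hn
    have : -1 < x / n := by
      rw [lt_div_iff₀ hn']
      linarith
    linarith
  -- support set
  have hset : ∀ (n : ℕ), 0 < n → {x | 0 < g n x} = Set.Ioo (-(n:ℝ)) 0 := by
    intro n hn
    ext x
    simp only [Set.mem_setOf_eq, hg, Set.mem_Ioo]
    by_cases h : -(n:ℝ) < x ∧ x < 0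
    · simp [h, pow_pos (hpos n hn x h.1 h.2)]
    · simp [h]
  -- entropy value
  have hHval : ∀ n : ℕ, 1 ≤ n → H (g n) = 1 - 1/(n:ℝ) := by
    intro n hn
    obtain ⟨m, rfl⟩ : ∃ m, n = m + 1 := ⟨n - 1, (Nat.succ_pred_eq_of_pos hn).symm⟩
    rw [hH, hset _ (Nat.succ_pos m)]
    rw [setIntegral_congr_fun measurableSet_Ioo
      (g := fun x : ℝ => (1 + x/((m+1:ℕ):ℝ))^m * Real.log ((1 + x/((m+1:ℕ):ℝ))^m))
      (fun x hx => by
        rw [hg, if_pos ⟨hx.1, hx.2⟩]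
        simp only [Nat.add_sub_cancel])]
    rw [← integral_Ioc_eq_integral_Ioo,
      ← intervalIntegral.integral_of_le (neg_nonpos.mpr (by positivity) : -((m+1:ℕ):ℝ) ≤ 0)]
    rw [aux_int1 m]
    have h2 : ((m:ℝ)+1) ≠ 0 := by positivity
    push_cast
    field_simp
    ring
  -- relative entropy value
  have hDval : ∀ n : ℕ, 1 ≤ n → D (g n) ψ = 1/((n:ℝ) * ((n:ℝ)+1)) := by
    intro n hn
    obtain ⟨m, rfl⟩ : ∃ m, n = m + 1 := ⟨n - 1, (Nat.succ_pred_eq_of_pos hn).symm⟩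
    rw [hD, hset _ (Nat.succ_pos m)]
    rw [setIntegral_congr_fun measurableSet_Ioo
      (g := fun x : ℝ => (1 + x/((m+1:ℕ):ℝ))^m * Real.log ((1 + x/((m+1:ℕ):ℝ))^m)
        - x * (1 + x/((m+1:ℕ):ℝ))^m)
      (fun x hx => by
        have hp : 0 < (1 + x/((m+1:ℕ):ℝ))^m :=
          pow_pos (hpos (m+1) (Nat.succ_pos m) x hx.1 hx.2) m
        rw [hg, if_pos ⟨hx.1, hx.2⟩, hψ, if_pos hx.2]
        simp only [Nat.add_sub_cancel]
        rw [Real.log_div (ne_of_gt hp) (Real.exp_ne_zero x), Real.log_exp]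
        ring)]
    rw [← integral_Ioc_eq_integral_Ioo,
      ← intervalIntegral.integral_of_le (neg_nonpos.mpr (by positivity) : -((m+1:ℕ):ℝ) ≤ 0)]
    have hc1 : Continuous fun x : ℝ => (1 + x/((m+1:ℕ):ℝ))^m := by
      exact ((continuous_const.add (continuous_id.div_const _)).pow m)
    have hint1 : IntervalIntegrable
        (fun x : ℝ => (1 + x/((m+1:ℕ):ℝ))^m * Real.log ((1 + x/((m+1:ℕ):ℝ))^m))
        volume (-((m+1:ℕ):ℝ)) 0 :=
      (Real.continuous_mul_log.comp hc1).intervalIntegrable _ _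
    have hint2 : IntervalIntegrable (fun x : ℝ => x * (1 + x/((m+1:ℕ):ℝ))^m)
        volume (-((m+1:ℕ):ℝ)) 0 :=
      (continuous_id.mul hc1).intervalIntegrable _ _
    rw [intervalIntegral.integral_sub hint1 hint2]
    rw [aux_int1 m, aux_int2 m]
    have h2 : ((m:ℝ)+1) ≠ 0 := by positivity
    have h3 : ((m:ℝ)+2) ≠ 0 := by positivity
    push_cast
    field_simp
    ring
  refine ⟨?_, ?_, ?_⟩
  · intro n hn
    rw [hHval n hn, hHval (n+1) (by omega)]
    have h1 : (1:ℝ) ≤ (n:ℝ) := by exact_mod_cast hn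
    have : 1/((n:ℝ)+1) ≤ 1/(n:ℝ) := one_div_le_one_div_of_le (by linarith) (by linarith)
    push_cast
    linarith
  · refine Tendsto.congr'
      (eventually_atTop.2 ⟨1, fun n hn => (hHval n hn).symm⟩) ?_
    simpa using tendsto_const_nhds.sub (tendsto_one_div_atTop_nhds_zero_nat (𝕜 := ℝ))
  · refine Tendsto.congr' (f₁ := fun n : ℕ => 1/(n:ℝ) * (1/((n:ℝ)+1)))
      (eventually_atTop.2 ⟨1, fun n hn => by
        show 1/(n:ℝ) * (1/((n:ℝ)+1)) = D (g n) ψ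
        rw [hDval n hn, ← one_div_mul_one_div]⟩) ?_
    simpa using (tendsto_one_div_atTop_nhds_zero_nat (𝕜 := ℝ)).mul
      (tendsto_one_div_add_atTop_nhds_zero_nat (𝕜 := ℝ))
end

section
/- Let F be the standard exponential distribution function, F(x) = 1 - e^{-x} for x ≥ 0. With norming constants a_n = 1, b_n = log n, the density of the normalized maximum is g_n(x) = n e^{-(x + log n)} (1 - e^{-(x + log n)})^{n-1} for x > -log n. Then the Shannon entropy H(g_n) increases with n and converges to H(λ) = γ + 1, the entropy of the Gumbel law, and the relative entropy D(g_n‖λ) converges to 0 as n → ∞. -/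
open MeasureTheory Real Filter
open Set Topology

lemma intlog01 : IntervalIntegrable Real.log volume 0 1 := by
  rw [intervalIntegrable_iff_integrableOn_Ioc_of_le zero_le_one]
  have hg : IntegrableOn (fun x : ℝ => 2 * x ^ (-(1/2) : ℝ)) (Set.Ioc 0 1) volume := by
    have h := (intervalIntegral.intervalIntegrable_rpow' (a := 0) (b := 1)
      (r := -(1/2)) (by norm_num)).const_mul 2
    rwa [intervalIntegrable_iff_integrableOn_Ioc_of_le zero_le_one] at h
  apply hg.mono' Real.measurable_log.aestronglyMeasurable
  refine (ae_restrict_iff' measurableSet_Ioc).2 (ae_of_all _ fun x hx => ?_)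
  obtain ⟨hx0, hx1⟩ := hx
  have h1 : Real.log x ≤ 0 := Real.log_nonpos hx0.le hx1
  rw [Real.norm_eq_abs, abs_of_nonpos h1]
  have h2 : -Real.log x = 2 * Real.log (x ^ (-(1/2) : ℝ)) := by
    rw [Real.log_rpow hx0]; ring
  have h3 : Real.log (x ^ (-(1/2) : ℝ)) ≤ x ^ (-(1/2) : ℝ) - 1 :=
    Real.log_le_sub_one_of_pos (Real.rpow_pos_of_pos hx0 _)
  rw [h2]
  nlinarith [Real.rpow_pos_of_pos hx0 (-(1/2) : ℝ)]

lemma intlog1sub : IntervalIntegrable (fun v : ℝ => Real.log (1 - v)) volume 0 1 := by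
  simpa using (intlog01.comp_sub_left 1).symm

lemma cov (c : ℝ) (F : ℝ → ℝ) :
    ∫ x in Set.Ioi (-c), F x
      = ∫ v in Set.Ioo (0:ℝ) 1, |(1 - v)⁻¹| * F (-c - Real.log (1 - v)) := by
  have himg : (fun v : ℝ => -c - Real.log (1 - v)) '' Set.Ioo 0 1 = Set.Ioi (-c) := by
    ext y
    constructor
    · rintro ⟨v, ⟨hv0, hv1⟩, rfl⟩
      have := Real.log_neg (by linarith) (by linarith : 1 - v < 1)
      simp only [Set.mem_Ioi]
      linarith
    · intro hy
      simp only [Set.mem_Ioi] at hy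
      refine ⟨1 - Real.exp (-(y + c)), ⟨?_, ?_⟩, ?_⟩
      · have : Real.exp (-(y + c)) < 1 := Real.exp_lt_one_iff.2 (by linarith)
        linarith
      · have := Real.exp_pos (-(y + c)); linarith
      · show -c - Real.log (1 - (1 - Real.exp (-(y + c)))) = y
        rw [show (1 : ℝ) - (1 - Real.exp (-(y + c))) = Real.exp (-(y + c)) by ring,
          Real.log_exp]
        ring
  have hder : ∀ v ∈ Set.Ioo (0:ℝ) 1,
      HasDerivWithinAt (fun v : ℝ => -c - Real.log (1 - v)) ((1 - v)⁻¹) (Set.Ioo 0 1) v := by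
    intro v hv
    have h1v : (1:ℝ) - v ≠ 0 := by have := hv.2; intro h; simp only [Set.mem_Ioo] at hv; linarith
    have h := ((Real.hasDerivAt_log h1v).comp v (((hasDerivAt_id v).const_sub 1)))
    have h' : HasDerivAt (fun v : ℝ => -c - Real.log (1 - v)) (-((1 - v)⁻¹ * -1)) v :=
      (h.const_sub (-c)).congr_deriv (by ring)
    simpa using h'.hasDerivWithinAt
  have hinj : Set.InjOn (fun v : ℝ => -c - Real.log (1 - v)) (Set.Ioo 0 1) := by
    intro a ha b hb hab
    simp only [Set.mem_Ioo] at ha hb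
    simp only [sub_right_inj] at hab
    have h1 : (1:ℝ) - a = 1 - b := by
      rw [← Real.exp_log (by linarith : (0:ℝ) < 1 - a), ← Real.exp_log (by linarith : (0:ℝ) < 1 - b), hab]
    linarith
  rw [← himg, integral_image_eq_integral_abs_deriv_smul measurableSet_Ioo hder hinj]
  simp [smul_eq_mul]


set_option maxHeartbeats 1000000 in
lemma integral_P (m : ℕ) :
    ∫ v in Set.Ioo (0:ℝ) 1,
      (Real.log ((m:ℝ)+1) * (((m:ℝ)+1) * v ^ m) + Real.log (1 - v) * (((m:ℝ)+1) * v ^ m)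
        + Real.log v * ((m : ℝ) * (((m:ℝ)+1) * v ^ m)))
    = Real.log ((m:ℝ)+1) - (∑ k ∈ Finset.range (m+1), ((k:ℝ)+1)⁻¹) - m / ((m:ℝ)+1) := by
  set P : ℝ → ℝ := fun v =>
    Real.log ((m:ℝ)+1) * (((m:ℝ)+1) * v ^ m) + Real.log (1 - v) * (((m:ℝ)+1) * v ^ m)
        + Real.log v * ((m : ℝ) * (((m:ℝ)+1) * v ^ m)) with hP
  set G : ℝ → ℝ := fun v =>
    Real.log ((m:ℝ)+1) * v ^ (m+1) + (v ^ (m+1) - 1) * Real.log (1 - v)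
      - (∑ k ∈ Finset.range (m+1), v ^ (k+1) / ((k:ℝ)+1))
      + (m:ℝ) * (v ^ (m+1) * Real.log v - v ^ (m+1) / ((m:ℝ)+1)) with hGdef
  have hderiv : ∀ v ∈ Set.Ioo (0:ℝ) 1, HasDerivAt G (P v) v := by
    intro v hv
    obtain ⟨hv0, hv1⟩ := hv
    have h1v : (0:ℝ) < 1 - v := by linarith
    have hpow : HasDerivAt (fun v : ℝ => v ^ (m+1)) (((m:ℝ)+1) * v ^ m) v := by
      simpa using hasDerivAt_pow (m+1) v
    have hlog1 : HasDerivAt (fun v : ℝ => Real.log (1 - v)) (-(1 - v)⁻¹) v := by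
      have h := (Real.hasDerivAt_log h1v.ne').comp v ((hasDerivAt_id v).const_sub 1)
      simpa [Function.comp_def] using h
    have hlogv : HasDerivAt Real.log v⁻¹ v := Real.hasDerivAt_log hv0.ne'
    have hsum : HasDerivAt (fun v : ℝ => ∑ k ∈ Finset.range (m+1), v ^ (k+1) / ((k:ℝ)+1))
        (∑ k ∈ Finset.range (m+1), v ^ k) v := by
      refine HasDerivAt.fun_sum fun k _ => ?_
      have h := (hasDerivAt_pow (k+1) v).div_const ((k:ℝ)+1)
      convert h using 1
      have hk : ((k:ℝ)+1) ≠ 0 := by positivity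
      · rfl
      simp only [Nat.add_sub_cancel, Nat.cast_add, Nat.cast_one]
      field_simp
    have hG : HasDerivAt G
        ((Real.log ((m:ℝ)+1) * (((m:ℝ)+1) * v ^ m)
          + ((((m:ℝ)+1) * v ^ m) * Real.log (1 - v) + (v ^ (m+1) - 1) * (-(1 - v)⁻¹))
          - (∑ k ∈ Finset.range (m+1), v ^ k))
          + (m:ℝ) * ((((m:ℝ)+1) * v ^ m * Real.log v + v ^ (m+1) * v⁻¹)
              - (((m:ℝ)+1) * v ^ m) / ((m:ℝ)+1))) v := by
      exact (((hpow.const_mul (Real.log ((m:ℝ)+1))).add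
        ((hpow.sub_const 1).mul hlog1)).sub hsum).add
        (((hpow.mul hlogv).sub (hpow.div_const ((m:ℝ)+1))).const_mul (m:ℝ))
    convert hG using 1
    rw [geom_sum_eq (by exact fun h => absurd h (by linarith) : v ≠ 1) (m+1)]
    have hm1 : ((m:ℝ)+1) ≠ 0 := by positivity
    have hvne : v ≠ 0 := hv0.ne'
    have hv1ne : v - 1 ≠ 0 := by intro h; apply hv1.ne; linarith
    have h1vne : (1:ℝ) - v ≠ 0 := h1v.ne'
    rw [hP]
    field_simp
    ring
  have hint : IntervalIntegrable P volume 0 1 := by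
    refine IntervalIntegrable.add (IntervalIntegrable.add ?_ ?_) ?_
    · exact Continuous.intervalIntegrable (by continuity) _ _
    · exact intlog1sub.mul_continuousOn (Continuous.continuousOn (by continuity))
    · exact intlog01.mul_continuousOn (Continuous.continuousOn (by continuity))
  have hvlog : Tendsto (fun v : ℝ => v ^ (m+1) * Real.log v) (𝓝[>] (0:ℝ)) (𝓝 0) := by
    have h := tendsto_log_mul_rpow_nhdsGT_zero (r := (m:ℝ)+1) (by positivity)
    refine h.congr' ?_
    filter_upwards [self_mem_nhdsWithin] with x hx
    have hx0 : (0:ℝ) < x := hx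
    rw [show ((m:ℝ)+1) = ((m+1 : ℕ):ℝ) by push_cast; ring, Real.rpow_natCast]
    ring
  have hcont0 : ContinuousAt (fun v : ℝ =>
      Real.log ((m:ℝ)+1) * v ^ (m+1) + (v ^ (m+1) - 1) * Real.log (1 - v)
      - (∑ k ∈ Finset.range (m+1), v ^ (k+1) / ((k:ℝ)+1))
      - (m:ℝ) * (v ^ (m+1) / ((m:ℝ)+1))) 0 := by
    have hlog : ContinuousAt (fun v : ℝ => Real.log (1 - v)) 0 :=
      (Real.continuousAt_log (by norm_num)).comp (by fun_prop)
    have hsumc : Continuous (fun v : ℝ => ∑ k ∈ Finset.range (m+1), v ^ (k+1) / ((k:ℝ)+1)) :=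
      continuous_finset_sum _ fun k _ => by continuity
    exact (((continuousAt_const.mul ((continuous_pow (m+1)).continuousAt)).add
      (((continuous_pow (m+1)).continuousAt.sub continuousAt_const).mul hlog)).sub
      hsumc.continuousAt).sub
      (continuousAt_const.mul (((continuous_pow (m+1)).continuousAt).div_const _))
  have haT : Tendsto G (𝓝[>] (0:ℝ)) (𝓝 0) := by
    have h := (hcont0.tendsto.mono_left nhdsWithin_le_nhds).add (hvlog.const_mul (m:ℝ))
    have heq : ∀ v : ℝ, (Real.log ((m:ℝ)+1) * v ^ (m+1) + (v ^ (m+1) - 1) * Real.log (1 - v)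
        - (∑ k ∈ Finset.range (m+1), v ^ (k+1) / ((k:ℝ)+1))
        - (m:ℝ) * (v ^ (m+1) / ((m:ℝ)+1))) + (m:ℝ) * (v ^ (m+1) * Real.log v) = G v := by
      intro v; rw [hGdef]; ring
    have h2 := Tendsto.congr heq h
    have hzs : ∑ k ∈ Finset.range (m+1), (0:ℝ) ^ (k+1) / ((k:ℝ)+1) = 0 :=
      Finset.sum_eq_zero fun k _ => by simp
    convert h2 using 2
    norm_num [hzs]
  have hmap : Tendsto (fun v : ℝ => 1 - v) (𝓝[<] (1:ℝ)) (𝓝[>] (0:ℝ)) := by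
    refine tendsto_nhdsWithin_of_tendsto_nhds_of_eventually_within _ ?_ ?_
    · have hc : Continuous (fun v : ℝ => 1 - v) := by continuity
      have h : Tendsto (fun v : ℝ => 1 - v) (𝓝 1) (𝓝 0) := by
        simpa using hc.tendsto 1
      exact h.mono_left nhdsWithin_le_nhds
    · exact eventually_nhdsWithin_of_forall fun v hv => by
        simp only [Set.mem_Iio] at hv
        simp only [Set.mem_Ioi]
        linarith
  have hll : Tendsto (fun v : ℝ => Real.log (1 - v) * (1 - v)) (𝓝[<] (1:ℝ)) (𝓝 0) := by
    have h := (tendsto_log_mul_rpow_nhdsGT_zero one_pos).comp hmap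
    simpa [Real.rpow_one, Function.comp_def] using h
  have hgeom : Tendsto (fun v : ℝ => ∑ k ∈ Finset.range (m+1), v ^ k) (𝓝[<] (1:ℝ))
      (𝓝 (∑ k ∈ Finset.range (m+1), (1:ℝ) ^ k)) := by
    exact ((continuous_finset_sum _ fun k _ => continuous_pow k).tendsto 1).mono_left
      nhdsWithin_le_nhds
  have hsing : Tendsto (fun v : ℝ => (v ^ (m+1) - 1) * Real.log (1 - v)) (𝓝[<] (1:ℝ)) (𝓝 0) := by
    have h2 := (hgeom.mul hll).neg
    rw [mul_zero, neg_zero] at h2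
    refine Tendsto.congr (fun v => ?_) h2
    rw [← geom_sum_mul]
    ring
  have hcont1 : ContinuousAt (fun v : ℝ =>
      Real.log ((m:ℝ)+1) * v ^ (m+1)
      - (∑ k ∈ Finset.range (m+1), v ^ (k+1) / ((k:ℝ)+1))
      + (m:ℝ) * (v ^ (m+1) * Real.log v - v ^ (m+1) / ((m:ℝ)+1))) 1 := by
    have hsumc : Continuous (fun v : ℝ => ∑ k ∈ Finset.range (m+1), v ^ (k+1) / ((k:ℝ)+1)) :=
      continuous_finset_sum _ fun k _ => by continuity
    have hlogc : ContinuousAt Real.log 1 := Real.continuousAt_log one_ne_zero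
    exact ((continuousAt_const.mul ((continuous_pow (m+1)).continuousAt)).sub
      hsumc.continuousAt).add
      (continuousAt_const.mul ((((continuous_pow (m+1)).continuousAt).mul hlogc).sub
        (((continuous_pow (m+1)).continuousAt).div_const _)))
  have hbT : Tendsto G (𝓝[<] (1:ℝ))
      (𝓝 (Real.log ((m:ℝ)+1) - (∑ k ∈ Finset.range (m+1), ((k:ℝ)+1)⁻¹) - m / ((m:ℝ)+1))) := by
    have h := hsing.add (hcont1.tendsto.mono_left nhdsWithin_le_nhds)
    have heq : ∀ v : ℝ, (v ^ (m+1) - 1) * Real.log (1 - v)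
        + (Real.log ((m:ℝ)+1) * v ^ (m+1)
          - (∑ k ∈ Finset.range (m+1), v ^ (k+1) / ((k:ℝ)+1))
          + (m:ℝ) * (v ^ (m+1) * Real.log v - v ^ (m+1) / ((m:ℝ)+1))) = G v := by
      intro v; rw [hGdef]; ring
    have h2 := Tendsto.congr heq h
    convert h2 using 2
    have hsum1 : ∑ k ∈ Finset.range (m+1), (1:ℝ) ^ (k+1) / ((k:ℝ)+1)
        = ∑ k ∈ Finset.range (m+1), ((k:ℝ)+1)⁻¹ := by
      refine Finset.sum_congr rfl fun k _ => by rw [one_pow, one_div]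
    simp only [one_pow, Real.log_one, mul_one, one_mul, mul_zero, zero_add, one_div]
    ring
  have key := intervalIntegral.integral_eq_sub_of_hasDerivAt_of_tendsto zero_lt_one hderiv hint
    haT hbT
  rw [← integral_Ioc_eq_integral_Ioo, ← intervalIntegral.integral_of_le zero_le_one]
  rw [key]
  ring

set_option maxHeartbeats 1000000 in
lemma integral_Q (m : ℕ) :
    ∫ v in Set.Ioo (0:ℝ) 1,
      (Real.log v * ((m : ℝ) * (((m:ℝ)+1) * v ^ m))
        + (((m:ℝ)+1) * v ^ m) * (((m:ℝ)+1) * (1 - v)))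
    = -(m:ℝ) / ((m:ℝ)+1) + ((m:ℝ)+1) - ((m:ℝ)+1)^2 / ((m:ℝ)+2) := by
  set Q : ℝ → ℝ := fun v =>
    Real.log v * ((m : ℝ) * (((m:ℝ)+1) * v ^ m))
      + (((m:ℝ)+1) * v ^ m) * (((m:ℝ)+1) * (1 - v)) with hQ
  set G : ℝ → ℝ := fun v =>
    (m:ℝ) * (v ^ (m+1) * Real.log v - v ^ (m+1) / ((m:ℝ)+1))
      + ((m:ℝ)+1) * v ^ (m+1) - ((m:ℝ)+1)^2 * (v ^ (m+2) / ((m:ℝ)+2)) with hGdef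
  have hderiv : ∀ v ∈ Set.Ioo (0:ℝ) 1, HasDerivAt G (Q v) v := by
    intro v hv
    obtain ⟨hv0, hv1⟩ := hv
    have hpow : HasDerivAt (fun v : ℝ => v ^ (m+1)) (((m:ℝ)+1) * v ^ m) v := by
      simpa using hasDerivAt_pow (m+1) v
    have hpow2 : HasDerivAt (fun v : ℝ => v ^ (m+2)) (((m:ℝ)+2) * v ^ (m+1)) v := by
      have := hasDerivAt_pow (m+2) v
      simpa [Nat.add_sub_cancel] using this
    have hlogv : HasDerivAt Real.log v⁻¹ v := Real.hasDerivAt_log hv0.ne'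
    have hG : HasDerivAt G
        (((m:ℝ) * ((((m:ℝ)+1) * v ^ m * Real.log v + v ^ (m+1) * v⁻¹)
            - (((m:ℝ)+1) * v ^ m) / ((m:ℝ)+1))
          + ((m:ℝ)+1) * (((m:ℝ)+1) * v ^ m))
          - ((m:ℝ)+1)^2 * ((((m:ℝ)+2) * v ^ (m+1)) / ((m:ℝ)+2))) v := by
      exact ((((hpow.mul hlogv).sub (hpow.div_const ((m:ℝ)+1))).const_mul (m:ℝ)).add
        (hpow.const_mul (((m:ℝ)+1)))).sub
        ((hpow2.div_const ((m:ℝ)+2)).const_mul (((m:ℝ)+1)^2))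
    convert hG using 1
    have hm1 : ((m:ℝ)+1) ≠ 0 := by positivity
    have hm2 : ((m:ℝ)+2) ≠ 0 := by positivity
    have hvne : v ≠ 0 := hv0.ne'
    rw [hQ]
    field_simp
    ring
  have hint : IntervalIntegrable Q volume 0 1 := by
    refine IntervalIntegrable.add ?_ ?_
    · exact intlog01.mul_continuousOn (Continuous.continuousOn (by continuity))
    · exact Continuous.intervalIntegrable (by continuity) _ _
  have hvlog : Tendsto (fun v : ℝ => v ^ (m+1) * Real.log v) (𝓝[>] (0:ℝ)) (𝓝 0) := by
    have h := tendsto_log_mul_rpow_nhdsGT_zero (r := (m:ℝ)+1) (by positivity)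
    refine h.congr' ?_
    filter_upwards [self_mem_nhdsWithin] with x hx
    have hx0 : (0:ℝ) < x := hx
    rw [show ((m:ℝ)+1) = ((m+1 : ℕ):ℝ) by push_cast; ring, Real.rpow_natCast]
    ring
  have hcont0 : ContinuousAt (fun v : ℝ =>
      -((m:ℝ) * (v ^ (m+1) / ((m:ℝ)+1)))
      + ((m:ℝ)+1) * v ^ (m+1) - ((m:ℝ)+1)^2 * (v ^ (m+2) / ((m:ℝ)+2))) 0 := by
    exact ((continuousAt_const.mul (((continuous_pow (m+1)).continuousAt).div_const _)).neg.add
      (continuousAt_const.mul ((continuous_pow (m+1)).continuousAt))).sub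
      (continuousAt_const.mul (((continuous_pow (m+2)).continuousAt).div_const _))
  have haT : Tendsto G (𝓝[>] (0:ℝ)) (𝓝 0) := by
    have h := (hcont0.tendsto.mono_left nhdsWithin_le_nhds).add (hvlog.const_mul (m:ℝ))
    have heq : ∀ v : ℝ, (-((m:ℝ) * (v ^ (m+1) / ((m:ℝ)+1)))
        + ((m:ℝ)+1) * v ^ (m+1) - ((m:ℝ)+1)^2 * (v ^ (m+2) / ((m:ℝ)+2)))
        + (m:ℝ) * (v ^ (m+1) * Real.log v) = G v := by
      intro v; rw [hGdef]; ring
    have h2 := Tendsto.congr heq h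
    convert h2 using 2
    norm_num
  have hbT : Tendsto G (𝓝[<] (1:ℝ))
      (𝓝 (-(m:ℝ) / ((m:ℝ)+1) + ((m:ℝ)+1) - ((m:ℝ)+1)^2 / ((m:ℝ)+2))) := by
    have hlogc : ContinuousAt Real.log 1 := Real.continuousAt_log one_ne_zero
    have hc : ContinuousAt G 1 := by
      rw [hGdef]
      exact ((continuousAt_const.mul ((((continuous_pow (m+1)).continuousAt).mul hlogc).sub
        (((continuous_pow (m+1)).continuousAt).div_const _))).add
        (continuousAt_const.mul ((continuous_pow (m+1)).continuousAt))).sub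
        (continuousAt_const.mul (((continuous_pow (m+2)).continuousAt).div_const _))
    have h : Tendsto G (𝓝[<] (1:ℝ)) (𝓝 (G 1)) :=
      hc.tendsto.mono_left nhdsWithin_le_nhds
    convert h using 2
    rw [hGdef]
    simp only [one_pow, Real.log_one, mul_one, one_mul, mul_zero, zero_sub, one_div]
    ring
  have key := intervalIntegral.integral_eq_sub_of_hasDerivAt_of_tendsto zero_lt_one hderiv hint
    haT hbT
  rw [← integral_Ioc_eq_integral_Ioo, ← intervalIntegral.integral_of_le zero_le_one]
  rw [key]
  ring

/-- For the standard exponential distribution with norming constants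
`a_n = 1`, `b_n = log n`, the density of the normalized maximum is
`g_n x = n * exp (-(x + log n)) * (1 - exp (-(x + log n)))^(n-1)` for `x > -log n`.
The Shannon entropy `H (g n)` increases with `n` and converges to `H(λ) = γ + 1`,
the entropy of the Gumbel law, and the relative entropy `D (g n ‖ λ)` converges
to `0`. -/
theorem entropy_max_exponential
    (g : ℕ → ℝ → ℝ)
    (hg : ∀ n x, g n x =
      if -Real.log n < x
        then n * Real.exp (-(x + Real.log n)) *
          (1 - Real.exp (-(x + Real.log n))) ^ (n - 1)
        else 0)
    (lam : ℝ → ℝ)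
    (hlam : ∀ x, lam x = Real.exp (-x) * Real.exp (-Real.exp (-x)))
    (H : (ℝ → ℝ) → ℝ)
    (hH : ∀ p, H p = -∫ x in {x | 0 < p x}, p x * Real.log (p x))
    (D : (ℝ → ℝ) → (ℝ → ℝ) → ℝ)
    (hD : ∀ p q, D p q = ∫ x in {x | 0 < p x}, p x * Real.log (p x / q x)) :
    (∀ n, 1 ≤ n → H (g n) ≤ H (g (n + 1))) ∧
    Tendsto (fun n => H (g n)) atTop
      (nhds (Real.eulerMascheroniConstant + 1)) ∧
    Tendsto (fun n => D (g n) lam) atTop (nhds 0) := by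
  -- positivity set
  have hset : ∀ m : ℕ, {x | 0 < g (m+1) x} = Set.Ioi (-Real.log ((m+1:ℕ):ℝ)) := by
    intro m
    ext x
    simp only [Set.mem_setOf_eq, Set.mem_Ioi]
    rw [hg]
    by_cases hx : -Real.log ((m+1:ℕ):ℝ) < x
    · rw [if_pos hx]
      constructor
      · intro _; exact hx
      · intro _
        have hNpos : (0:ℝ) < ((m+1:ℕ):ℝ) := by positivity
        have hlt : Real.exp (-(x + Real.log ((m+1:ℕ):ℝ))) < 1 :=
          Real.exp_lt_one_iff.2 (by linarith)
        have h2 : (0:ℝ) < 1 - Real.exp (-(x + Real.log ((m+1:ℕ):ℝ))) := by linarith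
        exact mul_pos (mul_pos hNpos (Real.exp_pos _)) (pow_pos h2 _)
    · rw [if_neg hx]
      simp only [lt_self_iff_false, false_iff]
      exact hx
  -- value of g at substituted point
  have hgval : ∀ (m : ℕ) (v : ℝ), v ∈ Set.Ioo (0:ℝ) 1 →
      g (m+1) (-Real.log ((m+1:ℕ):ℝ) - Real.log (1-v)) = ((m+1:ℕ):ℝ) * ((1-v) * v^m) := by
    intro m v hv
    obtain ⟨hv0, hv1⟩ := hv
    have h1v : (0:ℝ) < 1 - v := by linarith
    have hlogneg : Real.log (1-v) < 0 := Real.log_neg h1v (by linarith)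
    rw [hg]
    rw [if_pos (by linarith :
      -Real.log ((m+1:ℕ):ℝ) < -Real.log ((m+1:ℕ):ℝ) - Real.log (1-v))]
    rw [show -((-Real.log ((m+1:ℕ):ℝ) - Real.log (1-v)) + Real.log ((m+1:ℕ):ℝ))
        = Real.log (1-v) by ring]
    rw [Real.exp_log h1v, Nat.add_sub_cancel, sub_sub_cancel]
    ring
  -- entropy value
  have hval : ∀ m : ℕ, H (g (m+1)) =
      (∑ k ∈ Finset.range (m+1), ((k:ℝ)+1)⁻¹) - Real.log ((m:ℝ)+1) + m/((m:ℝ)+1) := by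
    intro m
    calc H (g (m+1))
        = -∫ x in Set.Ioi (-Real.log ((m+1:ℕ):ℝ)), g (m+1) x * Real.log (g (m+1) x) := by
          rw [hH, hset]
      _ = -∫ v in Set.Ioo (0:ℝ) 1, |(1 - v)⁻¹| *
            (g (m+1) (-Real.log ((m+1:ℕ):ℝ) - Real.log (1 - v)) *
             Real.log (g (m+1) (-Real.log ((m+1:ℕ):ℝ) - Real.log (1 - v)))) := by
          rw [cov (Real.log ((m+1:ℕ):ℝ)) (fun x => g (m+1) x * Real.log (g (m+1) x))]
      _ = -∫ v in Set.Ioo (0:ℝ) 1,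
            (Real.log ((m:ℝ)+1) * (((m:ℝ)+1) * v ^ m) + Real.log (1 - v) * (((m:ℝ)+1) * v ^ m)
              + Real.log v * ((m : ℝ) * (((m:ℝ)+1) * v ^ m))) := by
          refine congrArg Neg.neg (setIntegral_congr_fun measurableSet_Ioo fun v hv => ?_)
          obtain ⟨hv0, hv1⟩ := hv
          have h1v : (0:ℝ) < 1 - v := by linarith
          rw [hgval m v ⟨hv0, hv1⟩, abs_of_pos (inv_pos.2 h1v)]
          rw [Real.log_mul (by positivity) (ne_of_gt (mul_pos h1v (pow_pos hv0 m)))]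
          rw [Real.log_mul h1v.ne' (pow_ne_zero m hv0.ne'), Real.log_pow]
          push_cast
          field_simp
          ring
      _ = (∑ k ∈ Finset.range (m+1), ((k:ℝ)+1)⁻¹) - Real.log ((m:ℝ)+1) + m/((m:ℝ)+1) := by
          rw [integral_P m]; ring
  -- relative entropy value
  have hDval : ∀ m : ℕ, D (g (m+1)) lam =
      -(m:ℝ)/((m:ℝ)+1) + ((m:ℝ)+1) - ((m:ℝ)+1)^2/((m:ℝ)+2) := by
    intro m
    have hN : (0:ℝ) < ((m+1:ℕ):ℝ) := by positivity
    calc D (g (m+1)) lam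
        = ∫ x in Set.Ioi (-Real.log ((m+1:ℕ):ℝ)),
            g (m+1) x * Real.log (g (m+1) x / lam x) := by
          rw [hD, hset]
      _ = ∫ v in Set.Ioo (0:ℝ) 1, |(1 - v)⁻¹| *
            (g (m+1) (-Real.log ((m+1:ℕ):ℝ) - Real.log (1 - v)) *
             Real.log (g (m+1) (-Real.log ((m+1:ℕ):ℝ) - Real.log (1 - v)) /
               lam (-Real.log ((m+1:ℕ):ℝ) - Real.log (1 - v)))) := by
          rw [cov (Real.log ((m+1:ℕ):ℝ)) (fun x => g (m+1) x * Real.log (g (m+1) x / lam x))]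
      _ = ∫ v in Set.Ioo (0:ℝ) 1,
            (Real.log v * ((m : ℝ) * (((m:ℝ)+1) * v ^ m))
              + (((m:ℝ)+1) * v ^ m) * (((m:ℝ)+1) * (1 - v))) := by
          refine setIntegral_congr_fun measurableSet_Ioo fun v hv => ?_
          obtain ⟨hv0, hv1⟩ := hv
          have h1v : (0:ℝ) < 1 - v := by linarith
          have hexp : Real.exp (-(-Real.log ((m+1:ℕ):ℝ) - Real.log (1-v)))
              = ((m+1:ℕ):ℝ) * (1-v) := by
            rw [show -(-Real.log ((m+1:ℕ):ℝ) - Real.log (1-v))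
                = Real.log ((m+1:ℕ):ℝ) + Real.log (1-v) by ring]
            rw [Real.exp_add, Real.exp_log hN, Real.exp_log h1v]
          rw [hgval m v ⟨hv0, hv1⟩, abs_of_pos (inv_pos.2 h1v), hlam, hexp]
          have harg : ((m+1:ℕ):ℝ) * ((1-v) * v^m) /
              (((m+1:ℕ):ℝ) * (1-v) * Real.exp (-(((m+1:ℕ):ℝ) * (1-v))))
              = v^m * Real.exp (((m+1:ℕ):ℝ) * (1-v)) := by
            rw [Real.exp_neg]
            field_simp
          rw [harg, Real.log_mul (pow_ne_zero m hv0.ne') (Real.exp_ne_zero _),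
            Real.log_pow, Real.log_exp]
          push_cast
          field_simp
      _ = -(m:ℝ)/((m:ℝ)+1) + ((m:ℝ)+1) - ((m:ℝ)+1)^2/((m:ℝ)+2) := integral_Q m
  refine ⟨?_, ?_, ?_⟩
  · -- monotonicity
    intro n hn
    obtain ⟨m, rfl⟩ : ∃ m, n = m + 1 := ⟨n - 1, by omega⟩
    rw [hval m, hval (m+1)]
    push_cast
    conv_rhs => rw [Finset.sum_range_succ]
    push_cast
    have h1 : (0:ℝ) < (m:ℝ)+1 := by positivity
    have h2 : (0:ℝ) < (m:ℝ)+2 := by positivity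
    have hlog : Real.log ((m:ℝ)+1+1) - Real.log ((m:ℝ)+1) ≤ 1/((m:ℝ)+1) := by
      have h3 := Real.log_le_sub_one_of_pos (show (0:ℝ) < ((m:ℝ)+1+1)/((m:ℝ)+1) by positivity)
      rw [Real.log_div (by positivity) h1.ne'] at h3
      have h4 : ((m:ℝ)+1+1)/((m:ℝ)+1) - 1 = 1/((m:ℝ)+1) := by field_simp; ring
      linarith
    have e1 : ((m:ℝ)+1+1)⁻¹ + ((m:ℝ)+1)/((m:ℝ)+1+1) - (m:ℝ)/((m:ℝ)+1) = 1/((m:ℝ)+1) := by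
      have h1' : ((m:ℝ)+1) ≠ 0 := by positivity
      have h2' : ((m:ℝ)+1+1) ≠ 0 := by positivity
      have ha : ((m:ℝ)+1+1)⁻¹ + ((m:ℝ)+1)/((m:ℝ)+1+1) = 1 := by
        rw [inv_eq_one_div, ← add_div, div_eq_one_iff_eq h2']
        ring
      rw [ha, sub_eq_iff_eq_add, ← add_div, eq_comm, div_eq_one_iff_eq h1']
      ring
    linarith
  · -- convergence of entropy
    have hHeq : (fun n : ℕ => ((harmonic n : ℝ)) - Real.log n + ((n:ℝ)-1)/n)
        =ᶠ[atTop] (fun n => H (g n)) := by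
      filter_upwards [eventually_ge_atTop 1] with n hn
      obtain ⟨m, rfl⟩ : ∃ m, n = m + 1 := ⟨n - 1, by omega⟩
      rw [hval m]
      have hharm : ((harmonic (m+1) : ℚ) : ℝ) = ∑ k ∈ Finset.range (m+1), ((k:ℝ)+1)⁻¹ := by
        rw [harmonic]
        push_cast
        rfl
      rw [hharm]
      push_cast
      ring
    have hT : Tendsto (fun n : ℕ => ((harmonic n : ℝ)) - Real.log n + ((n:ℝ)-1)/n) atTop
        (𝓝 (Real.eulerMascheroniConstant + 1)) := by
      have h2 : Tendsto (fun n : ℕ => ((n:ℝ)-1)/n) atTop (𝓝 1) := by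
        have h3 : Tendsto (fun n : ℕ => 1 - 1/(n:ℝ)) atTop (𝓝 (1 - 0)) :=
          tendsto_const_nhds.sub tendsto_one_div_atTop_nhds_zero_nat
        rw [sub_zero] at h3
        refine h3.congr' ?_
        filter_upwards [eventually_ge_atTop 1] with n hn
        have hne : (n:ℝ) ≠ 0 := Nat.cast_ne_zero.2 (by omega)
        field_simp
      exact Real.tendsto_harmonic_sub_log.add h2
    exact hT.congr' hHeq
  · -- convergence of relative entropy
    have hDeq : (fun n : ℕ => 1/(n:ℝ) - 1/((n:ℝ)+1)) =ᶠ[atTop] (fun n => D (g n) lam) := by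
      filter_upwards [eventually_ge_atTop 1] with n hn
      obtain ⟨m, rfl⟩ : ∃ m, n = m + 1 := ⟨n - 1, by omega⟩
      rw [hDval m]
      push_cast
      field_simp
      ring
    have hT0 : Tendsto (fun n : ℕ => 1/(n:ℝ) - 1/((n:ℝ)+1)) atTop (𝓝 0) := by
      have h2 : Tendsto (fun n : ℕ => 1/((n:ℝ)+1)) atTop (𝓝 0) := by
        have h3 := (tendsto_one_div_atTop_nhds_zero_nat : Tendsto (fun n : ℕ => 1/(n:ℝ)) atTop (𝓝 0)).comp (tendsto_add_atTop_nat 1)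
        refine h3.congr fun n => ?_
        simp only [Function.comp]
        push_cast
        ring
      simpa using tendsto_one_div_atTop_nhds_zero_nat.sub h2
    exact hT0.congr' hDeq
end

section
/- Fix an integer k ≥ 1 and α > 0. The limit law of the normalized k-th upper extreme in the Fréchet case, with density φ_α^{(k)}(x) = (α/(k-1)!) x^{-αk-1} e^{-x^{-α}} for x > 0, has Shannon entropy H(φ_α^{(k)}) = -log(α/(k-1)!) - ((αk+1)/α)·(-γ + Σ_{i=1}^{k-1} 1/i) + Γ(k+1)/(k-1)!. -/
open MeasureTheory Real Set Filter Asymptotics Topology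

lemma harmonic_cast_eq (n : ℕ) : (harmonic n : ℝ) = ∑ i ∈ Finset.Icc 1 n, (1:ℝ)/i := by
  induction n with
  | zero => simp [harmonic]
  | succ n ih =>
    rw [harmonic_succ, Finset.sum_Icc_succ_top (by omega)]
    rw [← ih]
    push_cast
    ring

lemma aux_integrable (n : ℕ) :
    IntegrableOn (fun t : ℝ => t ^ (n : ℝ) * (Real.log t * Real.exp (-t))) (Set.Ioi 0) := by
  have h := mellin_convergent_of_isBigO_scalar (a := (n:ℝ) + 2) (b := 1/2)
    (f := fun t => Real.log t * Real.exp (-t)) (s := (n:ℝ) + 1)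
    ?_ ?_ (by linarith) ?_ (by linarith [Nat.cast_nonneg (α := ℝ) n])
  · simpa using h
  · refine ContinuousOn.locallyIntegrableOn ?_ measurableSet_Ioi
    exact ((Real.continuousOn_log.mono (fun x hx => ne_of_gt hx)).mul
      (Real.continuous_exp.comp continuous_neg).continuousOn)
  · have h1 : Real.log =O[atTop] (fun t : ℝ => t ^ (1:ℝ)) :=
      (isLittleO_log_rpow_atTop one_pos).isBigO
    have h2 : (fun t : ℝ => Real.exp (-t)) =O[atTop] (fun t : ℝ => t ^ (-((n:ℝ)+3))) := by
      simpa only [neg_one_mul] using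
        (isLittleO_exp_neg_mul_rpow_atTop zero_lt_one (-((n:ℝ)+3))).isBigO
    refine (h1.mul h2).congr' (EventuallyEq.refl _ _) ?_
    filter_upwards [eventually_gt_atTop (0:ℝ)] with t ht
    rw [← Real.rpow_add ht]
    ring_nf
  · have h1 : Real.log =o[𝓝[>] (0:ℝ)] (fun t : ℝ => t ^ (-(1/2):ℝ)) :=
      isLittleO_log_rpow_nhdsGT_zero (by norm_num)
    have h2 : (fun t : ℝ => Real.exp (-t)) =O[𝓝[>] (0:ℝ)] (fun _ : ℝ => (1:ℝ)) := by
      refine isBigO_const_of_tendsto (l := 𝓝[>] (0:ℝ)) (y := (1:ℝ)) ?_ one_ne_zero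
      have : Tendsto (fun t : ℝ => Real.exp (-t)) (𝓝 0) (𝓝 (Real.exp (-0))) :=
        (Real.continuous_exp.comp continuous_neg).continuousAt
      simpa using this.mono_left nhdsWithin_le_nhds
    refine (h1.isBigO.mul h2).congr' (EventuallyEq.refl _ _) ?_
    filter_upwards with t
    simp


lemma aux_value (n : ℕ) :
    ∫ t in Set.Ioi (0:ℝ), t ^ (n : ℝ) * (Real.log t * Real.exp (-t))
      = (n.factorial : ℝ) * (-Real.eulerMascheroniConstant + harmonic n) := by
  set s : ℂ := (n : ℂ) + 1 with hs_def
  have hs : 0 < s.re := by simp [hs_def]; positivity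
  have h1 := Complex.hasDerivAt_GammaIntegral hs
  have h2 : HasDerivAt Complex.Gamma
      (∫ t : ℝ in Set.Ioi 0, (t:ℂ) ^ (s - 1) * (Real.log t * Real.exp (-t))) s := by
    refine h1.congr_of_eventuallyEq ?_
    have hopen : IsOpen {z : ℂ | 0 < z.re} := isOpen_lt continuous_const Complex.continuous_re
    filter_upwards [hopen.mem_nhds hs] with z hz
    exact Complex.Gamma_eq_integral hz
  have hsr : s = ((n + 1 : ℝ) : ℂ) := by push_cast [hs_def]; ring
  rw [hsr] at h2
  have h3 := h2.real_of_complex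
  rw [← hsr] at h3
  have h4 : HasDerivAt Real.Gamma
      ((∫ t : ℝ in Set.Ioi 0, (t:ℂ) ^ (s - 1) * (Real.log t * Real.exp (-t))).re)
      ((n : ℝ) + 1) := by
    refine HasDerivAt.congr_of_eventuallyEq ?_ (Filter.Eventually.of_forall
      (fun x => (Complex.Gamma_ofReal x).symm ▸ (Complex.ofReal_re _).symm))
    exact h3
  have h5 := Real.hasDerivAt_Gamma_nat n
  have h6 := h5.unique h4
  have h7 : (∫ t : ℝ in Set.Ioi 0, (t:ℂ) ^ (s - 1) * (Real.log t * Real.exp (-t)))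
      = ((∫ t in Set.Ioi (0:ℝ), t ^ (n : ℝ) * (Real.log t * Real.exp (-t)) : ℝ) : ℂ) := by
    refine Eq.trans ?_ (integral_ofReal (f := fun t => t ^ (n : ℝ) * (Real.log t * Real.exp (-t))))
    refine setIntegral_congr_fun measurableSet_Ioi (fun t ht => ?_)
    show _ = ((t ^ (n : ℝ) * (Real.log t * Real.exp (-t)) : ℝ) : ℂ)
    rw [Complex.ofReal_mul, Complex.ofReal_mul, Complex.ofReal_cpow (le_of_lt ht)]
    have h8 : ((n : ℝ) : ℂ) = s - 1 := by rw [hs_def]; push_cast; ring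
    rw [h8]
  rw [h7, Complex.ofReal_re] at h6
  rw [← h6]

/-- For an integer `k ≥ 1` and `α > 0`, the limit law of the
normalized `k`-th upper extreme in the Fréchet case, with density
`φ_α^(k) x = (α/(k-1)!) x^(-αk-1) e^(-x^(-α))` for `x > 0`, has Shannon entropy
`-log (α/(k-1)!) - ((αk+1)/α) (-γ + ∑_{i=1}^{k-1} 1/i) + Γ(k+1)/(k-1)!`. -/

theorem entropy_kth_frechet (k : ℕ) (hk : 1 ≤ k) (α : ℝ) (hα : 0 < α) :
    -∫ x in Set.Ioi (0 : ℝ),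
        (α / (Nat.factorial (k - 1)) * x ^ (-(α * k) - 1) * Real.exp (-x ^ (-α))) *
          Real.log
            (α / (Nat.factorial (k - 1)) * x ^ (-(α * k) - 1) * Real.exp (-x ^ (-α)))
      = -Real.log (α / (Nat.factorial (k - 1)))
        - ((α * k + 1) / α) *
            (-Real.eulerMascheroniConstant + ∑ i ∈ Finset.Icc 1 (k - 1), (1 : ℝ) / i)
        + Real.Gamma (k + 1) / (Nat.factorial (k - 1)) := by
  obtain ⟨n, rfl⟩ : ∃ n, k = n + 1 := ⟨k - 1, (Nat.succ_pred_eq_of_pos hk).symm⟩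
  simp only [Nat.add_sub_cancel]
  push_cast
  have hα' : α ≠ 0 := hα.ne'
  have hn! : (0:ℝ) < (n.factorial : ℝ) := by exact_mod_cast n.factorial_pos
  set c : ℝ := α / (n.factorial : ℝ) with hc
  have hc0 : 0 < c := div_pos hα hn!
  set g : ℝ → ℝ := fun t => (c/α) * (t ^ (n:ℝ) * Real.exp (-t)) *
      (Real.log c + ((α*((n:ℝ)+1)+1)/α) * Real.log t - t) with hg
  have hsub : (∫ x in Set.Ioi (0:ℝ),
      (c * x ^ (-(α * ((n:ℝ)+1)) - 1) * Real.exp (-x ^ (-α))) *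
        Real.log (c * x ^ (-(α * ((n:ℝ)+1)) - 1) * Real.exp (-x ^ (-α))))
      = ∫ t in Set.Ioi (0:ℝ), g t := by
    rw [← integral_comp_rpow_Ioi g (p := -α) (neg_ne_zero.mpr hα')]
    refine setIntegral_congr_fun measurableSet_Ioi (fun x hx => ?_)
    have hx0 : (0:ℝ) < x := hx
    have hxne : x ^ (-(α * ((n:ℝ)+1)) - 1) ≠ 0 := (Real.rpow_pos_of_pos hx0 _).ne'
    have hpow : x ^ (-α - 1) * x ^ (-α * (n:ℝ)) = x ^ (-(α * ((n:ℝ)+1)) - 1) := by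
      rw [← Real.rpow_add hx0]; ring_nf
    rw [smul_eq_mul, hg]
    simp only []
    rw [Real.log_mul (mul_ne_zero hc0.ne' hxne) (Real.exp_ne_zero _),
      Real.log_mul hc0.ne' hxne, Real.log_exp, Real.log_rpow hx0,
      Real.log_rpow hx0, ← Real.rpow_mul hx0.le, ← hpow, abs_neg, abs_of_pos hα]
    field_simp
    ring
  have hA : IntegrableOn (fun t : ℝ => Real.exp (-t) * t ^ (n:ℝ)) (Set.Ioi 0) := by
    have := Real.GammaIntegral_convergent (s := (n:ℝ)+1) (by positivity)
    simpa using this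
  have hC : IntegrableOn (fun t : ℝ => Real.exp (-t) * t ^ ((n:ℝ)+1)) (Set.Ioi 0) := by
    have := Real.GammaIntegral_convergent (s := (n:ℝ)+1+1) (by positivity)
    simpa using this
  have hB := aux_integrable n
  have hAval : ∫ t in Set.Ioi (0:ℝ), Real.exp (-t) * t ^ (n:ℝ) = (n.factorial : ℝ) := by
    have h := Real.Gamma_eq_integral (s := (n:ℝ)+1) (by positivity)
    rw [Real.Gamma_nat_eq_factorial] at h
    simpa using h.symm
  have hCval : ∫ t in Set.Ioi (0:ℝ), Real.exp (-t) * t ^ ((n:ℝ)+1)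
      = Real.Gamma ((n:ℝ)+1+1) := by
    have h := Real.Gamma_eq_integral (s := (n:ℝ)+1+1) (by positivity)
    simpa using h.symm
  have hBval := aux_value n
  have hgsplit : ∫ t in Set.Ioi (0:ℝ), g t =
      ∫ t in Set.Ioi (0:ℝ), ((c/α) * Real.log c * (Real.exp (-t) * t ^ (n:ℝ))
        + ((c/α) * ((α*((n:ℝ)+1)+1)/α)) * (t ^ (n:ℝ) * (Real.log t * Real.exp (-t)))
        - (c/α) * (Real.exp (-t) * t ^ ((n:ℝ)+1))) := by
    refine setIntegral_congr_fun measurableSet_Ioi (fun t ht => ?_)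
    have ht0 : (0:ℝ) < t := ht
    rw [hg]
    simp only []
    rw [Real.rpow_add_one ht0.ne']
    ring
  have hval : ∫ t in Set.Ioi (0:ℝ), g t
      = (c/α) * Real.log c * (n.factorial : ℝ)
        + ((c/α) * ((α*((n:ℝ)+1)+1)/α)) *
            ((n.factorial : ℝ) * (-Real.eulerMascheroniConstant + harmonic n))
        - (c/α) * Real.Gamma ((n:ℝ)+1+1) := by
    have hint1 : Integrable (fun t : ℝ => (c/α) * Real.log c * (Real.exp (-t) * t ^ (n:ℝ))
        + ((c/α) * ((α*((n:ℝ)+1)+1)/α)) * (t ^ (n:ℝ) * (Real.log t * Real.exp (-t))))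
        (volume.restrict (Set.Ioi 0)) := (hA.const_mul _).add (hB.const_mul _)
    rw [hgsplit, integral_sub hint1 (hC.const_mul _),
      integral_add (hA.const_mul _) (hB.const_mul _), integral_const_mul, integral_const_mul,
      integral_const_mul, hAval, hBval, hCval]
  have hfne : (n.factorial : ℝ) ≠ 0 := hn!.ne'
  have hca : c / α = ((n.factorial : ℝ))⁻¹ := by rw [hc]; field_simp
  rw [hsub, hval, harmonic_cast_eq, hca]
  field_simp
  ring
end

section
/- Fix an integer k ≥ 1 and α > 0. The limit law of the normalized k-th upper extreme in the Weibull case, with density ψ_α^{(k)}(x) = (α/(k-1)!) (-x)^{αk-1} e^{-(-x)^{α}} for x < 0, has Shannon entropy H(ψ_α^{(k)}) = -log(α/(k-1)!) - ((αk-1)/α)·(-γ + Σ_{i=1}^{k-1} 1/i) + Γ(k+1)/(k-1)!. -/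
open MeasureTheory Real Set Filter

lemma abs_log_le_aux {t : ℝ} (ht : 0 < t) :
    |Real.log t| ≤ 2 * t ^ (1/2 : ℝ) + 2 * t ^ (-(1/2) : ℝ) := by
  have h1 : Real.log t ≤ 2 * t ^ (1/2 : ℝ) := by
    have := Real.log_le_rpow_div ht.le (by norm_num : (0:ℝ) < 1/2)
    linarith [this, Real.rpow_nonneg ht.le (1/2 : ℝ)]
  have h2 : -Real.log t ≤ 2 * t ^ (-(1/2) : ℝ) := by
    have := Real.log_le_rpow_div (inv_nonneg.mpr ht.le) (by norm_num : (0:ℝ) < 1/2)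
    rw [Real.log_inv, Real.inv_rpow ht.le, ← Real.rpow_neg ht.le] at this
    linarith
  have p1 : 0 ≤ 2 * t ^ (1/2 : ℝ) := by positivity
  have p2 : 0 ≤ 2 * t ^ (-(1/2) : ℝ) := by positivity
  rcases abs_cases (Real.log t) with ⟨h, _⟩ | ⟨h, _⟩ <;> rw [h] <;> linarith

lemma integrableOn_rpow_log_exp {s : ℝ} (hs : 1 ≤ s) :
    IntegrableOn (fun t : ℝ => t ^ (s - 1) * (Real.log t * Real.exp (-t))) (Ioi 0) := by
  have hint : IntegrableOn (fun t : ℝ =>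
      2 * (Real.exp (-t) * t ^ (s + 1/2 - 1)) + 2 * (Real.exp (-t) * t ^ (s - 1/2 - 1)))
      (Ioi 0) := by
    exact ((Real.GammaIntegral_convergent (by linarith : (0:ℝ) < s + 1/2)).const_mul 2).add
      ((Real.GammaIntegral_convergent (by linarith : (0:ℝ) < s - 1/2)).const_mul 2)
  refine Integrable.mono' hint ?_ ?_
  · refine ContinuousOn.aestronglyMeasurable ?_ measurableSet_Ioi
    refine ContinuousOn.mul ?_ (ContinuousOn.mul ?_ ?_)
    · intro x hx
      exact (Real.continuousAt_rpow_const x _ (Or.inl (ne_of_gt hx))).continuousWithinAt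
    · exact Real.continuousOn_log.mono (fun x hx => ne_of_gt hx)
    · exact (Real.continuous_exp.comp continuous_neg).continuousOn
  · filter_upwards [ae_restrict_mem measurableSet_Ioi] with t ht
    have ht' : (0:ℝ) < t := ht
    have e1 : t ^ (s + 1/2 - 1) = t ^ (s - 1) * t ^ (1/2 : ℝ) := by
      rw [← Real.rpow_add ht']; ring_nf
    have e2 : t ^ (s - 1/2 - 1) = t ^ (s - 1) * t ^ (-(1/2) : ℝ) := by
      rw [← Real.rpow_add ht']; ring_nf
    have hb := abs_log_le_aux ht'
    have hrp : (0:ℝ) ≤ t ^ (s - 1) := Real.rpow_nonneg ht'.le _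
    have hexp : (0:ℝ) < Real.exp (-t) := Real.exp_pos _
    rw [norm_mul, norm_mul, Real.norm_eq_abs, Real.norm_eq_abs, Real.norm_eq_abs,
      abs_of_nonneg hrp, abs_of_nonneg hexp.le, e1, e2]
    calc t ^ (s-1) * (|Real.log t| * Real.exp (-t))
        ≤ t ^ (s-1) * ((2 * t ^ (1/2:ℝ) + 2 * t ^ (-(1/2):ℝ)) * Real.exp (-t)) := by
          apply mul_le_mul_of_nonneg_left _ hrp
          exact mul_le_mul_of_nonneg_right hb hexp.le
      _ = 2 * (Real.exp (-t) * (t ^ (s-1) * t ^ (1/2:ℝ))) +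
          2 * (Real.exp (-t) * (t ^ (s-1) * t ^ (-(1/2):ℝ))) := by ring

lemma integral_rpow_log_exp (n : ℕ) :
    ∫ t in Ioi (0:ℝ), t ^ ((n:ℝ) + 1 - 1) * (Real.log t * Real.exp (-t))
      = (n.factorial : ℝ) * (-Real.eulerMascheroniConstant + (harmonic n : ℝ)) := by
  have hre : (0:ℝ) < ((n:ℂ) + 1).re := by simp; positivity
  have h1 := Complex.hasDerivAt_GammaIntegral hre
  have hev : Complex.Gamma =ᶠ[nhds ((n:ℂ) + 1)] Complex.GammaIntegral := by
    have hopen : IsOpen {s : ℂ | 0 < s.re} := isOpen_lt continuous_const Complex.continuous_re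
    filter_upwards [hopen.mem_nhds hre] with s hs using Complex.Gamma_eq_integral hs
  have h2 : deriv Complex.Gamma ((n:ℂ) + 1) =
      ∫ t : ℝ in Ioi 0, (t:ℂ) ^ ((n:ℂ) + 1 - 1) * (Real.log t * Real.exp (-t)) := by
    rw [hev.deriv_eq, h1.deriv]
  have h3 : (∫ t : ℝ in Ioi 0, (t:ℂ) ^ ((n:ℂ) + 1 - 1) * (Real.log t * Real.exp (-t)))
      = ((∫ t in Ioi (0:ℝ), t ^ ((n:ℝ) + 1 - 1) * (Real.log t * Real.exp (-t)) : ℝ) : ℂ) := by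
    calc ∫ t : ℝ in Ioi 0, (t:ℂ) ^ ((n:ℂ) + 1 - 1) * (Real.log t * Real.exp (-t))
        = ∫ t : ℝ in Ioi 0,
            ((t ^ ((n:ℝ) + 1 - 1) * (Real.log t * Real.exp (-t)) : ℝ) : ℂ) := by
          refine setIntegral_congr_fun measurableSet_Ioi (fun t ht => ?_)
          push_cast
          rw [Complex.ofReal_cpow (le_of_lt ht)]
          push_cast
          ring
      _ = _ := integral_ofReal
  have h4 := Complex.deriv_Gamma_nat n
  rw [h2, h3] at h4
  exact_mod_cast h4

/-- For an integer `k ≥ 1` and `α > 0`, the limit law of the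
normalized `k`-th upper extreme in the Weibull case, with density
`ψ_α^(k) x = (α/(k-1)!) (-x)^(αk-1) e^(-(-x)^α)` for `x < 0`, has Shannon entropy
`-log (α/(k-1)!) - ((αk-1)/α) (-γ + ∑_{i=1}^{k-1} 1/i) + Γ(k+1)/(k-1)!`. -/
theorem entropy_kth_weibull (k : ℕ) (hk : 1 ≤ k) (α : ℝ) (hα : 0 < α) :
    -∫ x in Set.Iio (0 : ℝ),
        (α / (Nat.factorial (k - 1)) * (-x) ^ (α * k - 1) * Real.exp (-(-x) ^ α)) *
          Real.log
            (α / (Nat.factorial (k - 1)) * (-x) ^ (α * k - 1) * Real.exp (-(-x) ^ α))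
      = -Real.log (α / (Nat.factorial (k - 1)))
        - ((α * k - 1) / α) *
            (-Real.eulerMascheroniConstant + ∑ i ∈ Finset.Icc 1 (k - 1), (1 : ℝ) / i)
        + Real.Gamma (k + 1) / (Nat.factorial (k - 1)) := by
  have hfac : (0:ℝ) < (Nat.factorial (k-1) : ℝ) := by
    exact_mod_cast Nat.factorial_pos (k-1)
  have hk1 : (1:ℝ) ≤ (k:ℝ) := by exact_mod_cast hk
  have hk0 : (0:ℝ) < (k:ℝ) := by linarith
  have hcast : ((k-1:ℕ):ℝ) = (k:ℝ) - 1 := by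
    rw [Nat.cast_sub hk]; simp
  set c : ℝ := α / (Nat.factorial (k-1) : ℝ) with hc
  have hc0 : 0 < c := div_pos hα hfac
  set F : ℝ → ℝ := fun t => ((Nat.factorial (k-1) : ℝ))⁻¹ * (Real.exp (-t) * t ^ ((k:ℝ)-1)) *
      (Real.log c + ((α*k-1)/α) * Real.log t - t) with hF
  set ψ : ℝ → ℝ := fun x => (c * (-x) ^ (α*(k:ℝ)-1) * Real.exp (-(-x)^α)) *
      Real.log (c * (-x) ^ (α*(k:ℝ)-1) * Real.exp (-(-x)^α)) with hψ
  have step1 : (∫ x in Set.Iio (0:ℝ), ψ x) = ∫ t in Ioi (0:ℝ), F t := by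
    have e1 : (∫ x in Set.Iio (0:ℝ), ψ x) = ∫ u in Ioi (0:ℝ), ψ (-u) := by
      rw [← integral_Iic_eq_integral_Iio]
      have h := integral_comp_neg_Iic (0:ℝ) (fun u => ψ (-u))
      simp only [neg_neg, neg_zero] at h
      exact h
    have e2 : ∀ u ∈ Ioi (0:ℝ), ψ (-u) = (α * u ^ (α - 1)) • F (u ^ α) := by
      intro u hu
      have hu' : (0:ℝ) < u := hu
      have hua : (0:ℝ) < u ^ α := Real.rpow_pos_of_pos hu' _
      have hub : (0:ℝ) < u ^ (α*(k:ℝ)-1) := Real.rpow_pos_of_pos hu' _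
      have hlog : Real.log (c * u ^ (α*(k:ℝ)-1) * Real.exp (-u^α))
          = Real.log c + (α*(k:ℝ)-1) * Real.log u - u^α := by
        rw [Real.log_mul (by positivity) (Real.exp_ne_zero _),
          Real.log_mul (ne_of_gt hc0) (ne_of_gt hub), Real.log_rpow hu', Real.log_exp]
        ring
      have h2 : (u^α) ^ ((k:ℝ)-1) = u ^ (α*((k:ℝ)-1)) := (Real.rpow_mul hu'.le _ _).symm
      have h3 : Real.log (u^α) = α * Real.log u := Real.log_rpow hu' α
      have h4 : ((α*(k:ℝ)-1)/α) * (α * Real.log u) = (α*(k:ℝ)-1) * Real.log u := by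
        field_simp
      have h6 : c * u ^ (α*(k:ℝ)-1) = α * u ^ (α-1) *
          (((Nat.factorial (k-1):ℝ))⁻¹ * u ^ (α*((k:ℝ)-1))) := by
        have h5 : u^(α-1) * u^(α*((k:ℝ)-1)) = u^(α*(k:ℝ)-1) := by
          rw [← Real.rpow_add hu']; ring_nf
        rw [← h5, hc]
        field_simp
      simp only [hψ, hF, neg_neg, smul_eq_mul]
      rw [hlog, h2, h3, h4, h6]
      ring
    rw [e1, setIntegral_congr_fun measurableSet_Ioi e2,
      integral_comp_rpow_Ioi_of_pos hα]
  have hint0 : IntegrableOn (fun t => Real.exp (-t) * t ^ ((k:ℝ)-1)) (Ioi 0) :=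
    Real.GammaIntegral_convergent hk0
  have hint1 : IntegrableOn (fun t => t ^ ((k:ℝ)-1) * (Real.log t * Real.exp (-t))) (Ioi 0) :=
    integrableOn_rpow_log_exp hk1
  have hint2 : IntegrableOn (fun t => Real.exp (-t) * t ^ ((k:ℝ)+1-1)) (Ioi 0) :=
    Real.GammaIntegral_convergent (by linarith : (0:ℝ) < (k:ℝ)+1)
  have split : ∀ t ∈ Ioi (0:ℝ), F t =
      (Real.log c * (((Nat.factorial (k-1):ℝ))⁻¹ * (Real.exp (-t) * t ^ ((k:ℝ)-1)))
      + ((α*(k:ℝ)-1)/α) * (((Nat.factorial (k-1):ℝ))⁻¹ *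
          (t ^ ((k:ℝ)-1) * (Real.log t * Real.exp (-t)))))
      - ((Nat.factorial (k-1):ℝ))⁻¹ * (Real.exp (-t) * t ^ ((k:ℝ)+1-1)) := by
    intro t ht
    have ht' : (0:ℝ) < t := ht
    have h7 : t ^ ((k:ℝ)+1-1) = t ^ ((k:ℝ)-1) * t := by
      rw [show (k:ℝ)+1-1 = ((k:ℝ)-1)+1 by ring, Real.rpow_add_one (ne_of_gt ht')]
    simp only [hF, h7]
    ring
  have v0 : ∫ t in Ioi (0:ℝ), Real.exp (-t) * t ^ ((k:ℝ)-1) = (Nat.factorial (k-1) : ℝ) := by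
    rw [← Real.Gamma_eq_integral hk0,
      show (k:ℝ) = ((k-1:ℕ):ℝ) + 1 by rw [hcast]; ring,
      Real.Gamma_nat_eq_factorial]
  have v1 : ∫ t in Ioi (0:ℝ), t ^ ((k:ℝ)-1) * (Real.log t * Real.exp (-t))
      = (Nat.factorial (k-1) : ℝ) * (-Real.eulerMascheroniConstant + (harmonic (k-1) : ℝ)) := by
    have h := integral_rpow_log_exp (k-1)
    rw [show ((k-1:ℕ):ℝ)+1-1 = (k:ℝ)-1 by rw [hcast]; ring] at h
    exact h
  have v2 : ∫ t in Ioi (0:ℝ), Real.exp (-t) * t ^ ((k:ℝ)+1-1) = Real.Gamma ((k:ℝ)+1) :=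
    (Real.Gamma_eq_integral (by linarith : (0:ℝ) < (k:ℝ)+1)).symm
  have hh : ((harmonic (k-1) : ℚ) : ℝ) = ∑ i ∈ Finset.Icc 1 (k-1), (1:ℝ)/i := by
    rw [harmonic_eq_sum_Icc]
    push_cast
    simp [one_div]
  have hA : Integrable (fun t : ℝ => Real.log c *
      (((Nat.factorial (k-1):ℝ))⁻¹ * (Real.exp (-t) * t ^ ((k:ℝ)-1))))
      (volume.restrict (Ioi 0)) := (hint0.const_mul _).const_mul _
  have hB : Integrable (fun t : ℝ => ((α*(k:ℝ)-1)/α) * (((Nat.factorial (k-1):ℝ))⁻¹ *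
      (t ^ ((k:ℝ)-1) * (Real.log t * Real.exp (-t))))) (volume.restrict (Ioi 0)) :=
    (hint1.const_mul _).const_mul _
  have hC : Integrable (fun t : ℝ => ((Nat.factorial (k-1):ℝ))⁻¹ *
      (Real.exp (-t) * t ^ ((k:ℝ)+1-1))) (volume.restrict (Ioi 0)) := hint2.const_mul _
  have hAB : Integrable (fun t : ℝ => Real.log c *
      (((Nat.factorial (k-1):ℝ))⁻¹ * (Real.exp (-t) * t ^ ((k:ℝ)-1)))
      + ((α*(k:ℝ)-1)/α) * (((Nat.factorial (k-1):ℝ))⁻¹ *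
      (t ^ ((k:ℝ)-1) * (Real.log t * Real.exp (-t))))) (volume.restrict (Ioi 0)) := hA.add hB
  rw [step1, setIntegral_congr_fun measurableSet_Ioi split, integral_sub hAB hC,
    integral_add hA hB,
    integral_const_mul, integral_const_mul, integral_const_mul, integral_const_mul,
    integral_const_mul, v0, v1, v2, ← hh]
  have hfne : (Nat.factorial (k-1) : ℝ) ≠ 0 := ne_of_gt hfac
  field_simp
  ring
end

section
/- Fix an integer k ≥ 1. The limit law of the normalized k-th upper extreme in the Gumbel case, with density λ^{(k)}(x) = (1/(k-1)!) e^{-kx} e^{-e^{-x}} for x ∈ ℝ, has Shannon entropy H(λ^{(k)}) = log((k-1)!) - k·(-γ + Σ_{i=1}^{k-1} 1/i) + Γ(k+1)/(k-1)!. -/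
open MeasureTheory Real

open Set Nat


lemma gumbel_subst (g : ℝ → ℝ) :
    ∫ t in Ioi (0:ℝ), g t = ∫ x : ℝ, Real.exp (-x) * g (Real.exp (-x)) := by
  have himg : (fun x : ℝ => Real.exp (-x)) '' univ = Ioi 0 := by
    rw [image_univ]
    have : Set.range (fun x : ℝ => Real.exp (-x)) = Set.range Real.exp := by
      ext y; constructor
      · rintro ⟨x, rfl⟩; exact ⟨-x, rfl⟩
      · rintro ⟨x, rfl⟩; exact ⟨-x, by simp⟩
    rw [this, Real.range_exp]
  have hderiv : ∀ x ∈ (univ : Set ℝ), HasDerivWithinAt (fun x => Real.exp (-x))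
      (-Real.exp (-x)) univ x := by
    intro x _
    exact (((Real.hasDerivAt_exp (-x)).comp x (hasDerivAt_neg x)).congr_deriv (by ring)).hasDerivWithinAt
  have hinj : InjOn (fun x : ℝ => Real.exp (-x)) univ := by
    intro a _ b _ h
    have := Real.exp_injective h
    linarith [neg_injective this]
  have := MeasureTheory.integral_image_eq_integral_abs_deriv_smul MeasurableSet.univ
    hderiv hinj g
  rw [himg] at this
  rw [this, MeasureTheory.setIntegral_univ]
  congr 1; ext x
  rw [abs_neg, abs_of_pos (Real.exp_pos _), smul_eq_mul]

lemma gumbel_subst_int (g : ℝ → ℝ) :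
    IntegrableOn g (Ioi (0:ℝ)) ↔ Integrable (fun x : ℝ => Real.exp (-x) * g (Real.exp (-x))) := by
  have himg : (fun x : ℝ => Real.exp (-x)) '' univ = Ioi 0 := by
    rw [image_univ]
    have : Set.range (fun x : ℝ => Real.exp (-x)) = Set.range Real.exp := by
      ext y; constructor
      · rintro ⟨x, rfl⟩; exact ⟨-x, rfl⟩
      · rintro ⟨x, rfl⟩; exact ⟨-x, by simp⟩
    rw [this, Real.range_exp]
  have hderiv : ∀ x ∈ (univ : Set ℝ), HasDerivWithinAt (fun x => Real.exp (-x))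
      (-Real.exp (-x)) univ x := by
    intro x _
    exact (((Real.hasDerivAt_exp (-x)).comp x (hasDerivAt_neg x)).congr_deriv (by ring)).hasDerivWithinAt
  have hinj : InjOn (fun x : ℝ => Real.exp (-x)) univ := by
    intro a _ b _ h
    have := Real.exp_injective h
    linarith [neg_injective this]
  have := MeasureTheory.integrableOn_image_iff_integrableOn_abs_deriv_smul MeasurableSet.univ
    hderiv hinj g
  rw [himg] at this
  rw [this, MeasureTheory.integrableOn_univ]
  have heq : (fun x : ℝ => |(-Real.exp (-x))| • g (Real.exp (-x)))
      = fun x : ℝ => Real.exp (-x) * g (Real.exp (-x)) := by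
    ext x; rw [abs_neg, abs_of_pos (Real.exp_pos _), smul_eq_mul]
  rw [heq]


lemma intOn_pow_exp (n : ℕ) :
    IntegrableOn (fun t : ℝ => t ^ n * Real.exp (-t)) (Ioi (0:ℝ)) := by
  have := Real.GammaIntegral_convergent (s := (n+1:ℝ)) (by positivity)
  refine this.congr_fun (fun t ht => ?_) measurableSet_Ioi
  beta_reduce
  rw [add_sub_cancel_right, Real.rpow_natCast, mul_comm]

lemma int_pow_exp (n : ℕ) :
    ∫ t in Ioi (0:ℝ), t ^ n * Real.exp (-t) = (n ! : ℝ) := by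
  have h := Real.Gamma_eq_integral (s := (n+1:ℝ)) (by positivity)
  rw [Real.Gamma_nat_eq_factorial] at h
  rw [h]
  refine setIntegral_congr_fun measurableSet_Ioi (fun t ht => ?_)
  rw [add_sub_cancel_right, Real.rpow_natCast, mul_comm]

lemma complex_log_integral (n : ℕ) :
    (∫ t : ℝ in Ioi 0, (t : ℂ) ^ ((n:ℂ) + 1 - 1) * (Real.log t * Real.exp (-t)))
      = ((n ! : ℝ) * (-Real.eulerMascheroniConstant + (harmonic n : ℝ)) : ℝ) := by
  have hre : (0 : ℝ) < ((n:ℂ)+1).re := by simp; positivity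
  have h1 := Complex.hasDerivAt_GammaIntegral (s := (n:ℂ)+1) hre
  have h2 : deriv Complex.GammaIntegral ((n:ℂ)+1) = deriv Complex.Gamma ((n:ℂ)+1) := by
    refine Filter.EventuallyEq.deriv_eq ?_
    have hopen : IsOpen {s : ℂ | 0 < s.re} := by
      exact isOpen_lt continuous_const Complex.continuous_re
    filter_upwards [hopen.mem_nhds hre] with s hs
    exact (Complex.Gamma_eq_integral hs).symm
  have h3 := Complex.deriv_Gamma_nat n
  rw [← h1.deriv, h2, h3]
  push_cast
  ring


lemma int_pow_exp_log (n : ℕ) :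
    ∫ t in Ioi (0:ℝ), t ^ n * Real.exp (-t) * Real.log t
      = (n ! : ℝ) * (-Real.eulerMascheroniConstant + (harmonic n : ℝ)) := by
  have hre : (0 : ℝ) < ((n:ℂ)+1).re := by simp; positivity
  have h1 := Complex.hasDerivAt_GammaIntegral (s := (n:ℂ)+1) hre
  have h2 : deriv Complex.GammaIntegral ((n:ℂ)+1) = deriv Complex.Gamma ((n:ℂ)+1) := by
    refine Filter.EventuallyEq.deriv_eq ?_
    have hopen : IsOpen {s : ℂ | 0 < s.re} := isOpen_lt continuous_const Complex.continuous_re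
    filter_upwards [hopen.mem_nhds hre] with s hs
    exact (Complex.Gamma_eq_integral hs).symm
  have h3 := Complex.deriv_Gamma_nat n
  have key : (∫ t : ℝ in Ioi 0, (t : ℂ) ^ ((n:ℂ) + 1 - 1) * (Real.log t * Real.exp (-t)))
      = (((n ! : ℝ) * (-Real.eulerMascheroniConstant + (harmonic n : ℝ)) : ℝ) : ℂ) := by
    rw [← h1.deriv, h2, h3]; push_cast; ring
  have heq : (fun t : ℝ => (t : ℂ) ^ ((n:ℂ) + 1 - 1) * (Real.log t * Real.exp (-t)))
      = fun t : ℝ => ((t ^ n * Real.exp (-t) * Real.log t : ℝ) : ℂ) := by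
    ext t
    rw [add_sub_cancel_right, Complex.cpow_natCast]
    push_cast; ring
  have hio : (∫ t in Ioi (0:ℝ), ((t ^ n * Real.exp (-t) * Real.log t : ℝ) : ℂ))
      = (((∫ t in Ioi (0:ℝ), t ^ n * Real.exp (-t) * Real.log t) : ℝ) : ℂ) :=
    integral_ofReal
  rw [heq, hio] at key
  exact_mod_cast key

lemma intOn_pow_exp_log (n : ℕ) :
    IntegrableOn (fun t : ℝ => t ^ n * Real.exp (-t) * Real.log t) (Ioi (0:ℝ)) := by
  have hre : (0 : ℝ) < ((n:ℂ)+1).re := by simp; positivity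
  have hm := (mellin_hasDerivAt_of_isBigO_rpow (E := ℂ)
      (f := fun t : ℝ => (Real.exp (-t) : ℂ)) (a := (n:ℝ)+2) (b := 0) (s := (n:ℂ)+1)
      ?_ ?_ ?_ ?_ ?_).1
  · have : IntegrableOn
        (fun t : ℝ => (t : ℂ) ^ (((n:ℂ)+1) - 1) • (Real.log t • (Real.exp (-t) : ℂ)))
        (Ioi (0:ℝ)) := hm
    have heq : (fun t : ℝ => (t : ℂ) ^ (((n:ℂ)+1) - 1) • (Real.log t • (Real.exp (-t) : ℂ)))
        = fun t : ℝ => ((t ^ n * Real.exp (-t) * Real.log t : ℝ) : ℂ) := by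
      ext t
      rw [add_sub_cancel_right, Complex.cpow_natCast, smul_eq_mul, Complex.real_smul]
      push_cast; ring
    rw [heq] at this
    have habs := this.norm
    have habs' : Integrable (fun t : ℝ => |t ^ n * Real.exp (-t) * Real.log t|)
        (volume.restrict (Ioi 0)) := by
      refine habs.congr (Filter.EventuallyEq.of_eq ?_)
      ext t; rw [Complex.norm_real, Real.norm_eq_abs]
    refine ⟨((measurable_id.pow_const n).mul (Real.measurable_exp.comp measurable_neg) |>.mul Real.measurable_log).aestronglyMeasurable, ?_⟩
    have h2 := habs'.2
    simp only [← Real.norm_eq_abs] at h2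
    exact (hasFiniteIntegral_norm_iff _).mp h2
  · refine (Continuous.continuousOn ?_).locallyIntegrableOn measurableSet_Ioi
    exact Complex.continuous_ofReal.comp (Real.continuous_exp.comp continuous_neg)
  · rw [← Asymptotics.isBigO_norm_left]
    simp_rw [Complex.norm_real,
      Asymptotics.isBigO_norm_left]
    simpa only [neg_one_mul] using
      (isLittleO_exp_neg_mul_rpow_atTop zero_lt_one _).isBigO
  · simp only [Complex.add_re, Complex.natCast_re, Complex.one_re]; linarith
  · simp_rw [neg_zero, Real.rpow_zero]
    refine Asymptotics.isBigO_const_of_tendsto (?_ : Filter.Tendsto _ _ (nhds (1 : ℂ))) one_ne_zero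
    rw [(by simp : (1 : ℂ) = Real.exp (-0))]
    exact (Complex.continuous_ofReal.comp
      (Real.continuous_exp.comp continuous_neg)).continuousWithinAt
  · exact hre

/-- For an integer `k ≥ 1`, the limit law of the normalized `k`-th
upper extreme in the Gumbel case, with density
`λ^(k) x = (1/(k-1)!) e^(-kx) e^(-e^(-x))`, has Shannon entropy
`log ((k-1)!) - k (-γ + ∑_{i=1}^{k-1} 1/i) + Γ(k+1)/(k-1)!`. -/
theorem entropy_kth_gumbel (k : ℕ) (hk : 1 ≤ k) :
    -∫ x : ℝ,
        (1 / (Nat.factorial (k - 1)) * Real.exp (-(k * x)) * Real.exp (-Real.exp (-x))) *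
          Real.log
            (1 / (Nat.factorial (k - 1)) * Real.exp (-(k * x)) * Real.exp (-Real.exp (-x)))
      = Real.log (Nat.factorial (k - 1))
        - k * (-Real.eulerMascheroniConstant + ∑ i ∈ Finset.Icc 1 (k - 1), (1 : ℝ) / i)
        + Real.Gamma (k + 1) / (Nat.factorial (k - 1)) := by
  obtain ⟨n, rfl⟩ : ∃ n, k = n + 1 := ⟨k - 1, (Nat.succ_pred_eq_of_pos hk).symm⟩
  simp only [Nat.add_sub_cancel]
  set c : ℝ := 1 / (n ! : ℝ) with hc
  set K : ℝ := ((n : ℝ) + 1) with hK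
  have hKcast : ((n + 1 : ℕ) : ℝ) = K := by push_cast [hK]; ring
  have hfacpos : (0 : ℝ) < (n ! : ℝ) := by exact_mod_cast Nat.factorial_pos n
  have hcpos : 0 < c := by positivity
  -- the three g functions
  set g1 : ℝ → ℝ := fun t => t ^ n * Real.exp (-t) with hg1
  set g2 : ℝ → ℝ := fun t => -(t ^ n * Real.exp (-t) * Real.log t) with hg2
  set g3 : ℝ → ℝ := fun t => t ^ (n + 1) * Real.exp (-t) with hg3
  have h1 : Integrable (fun x : ℝ => Real.exp (-x) * g1 (Real.exp (-x))) :=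
    (gumbel_subst_int g1).mp (intOn_pow_exp n)
  have h2 : Integrable (fun x : ℝ => Real.exp (-x) * g2 (Real.exp (-x))) :=
    (gumbel_subst_int g2).mp (intOn_pow_exp_log n).neg
  have h3 : Integrable (fun x : ℝ => Real.exp (-x) * g3 (Real.exp (-x))) :=
    (gumbel_subst_int g3).mp (intOn_pow_exp (n + 1))
  have hexpk : ∀ x : ℝ, Real.exp (-x) * (Real.exp (-x)) ^ n = Real.exp (-(K * x)) := by
    intro x
    have h : Real.exp (-x) ^ (n + 1) = Real.exp (-(K * x)) := by
      rw [← Real.exp_nat_mul]; congr 1; push_cast [hK]; ring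
    rw [← h]; ring
  -- pointwise identity
  have hpt : ∀ x : ℝ,
      (c * Real.exp (-(((n + 1 : ℕ) : ℝ) * x)) * Real.exp (-Real.exp (-x))) *
          Real.log (c * Real.exp (-(((n + 1 : ℕ) : ℝ) * x)) * Real.exp (-Real.exp (-x)))
        = (c * Real.log c) * (Real.exp (-x) * g1 (Real.exp (-x)))
          - (c * K) * (Real.exp (-x) * g2 (Real.exp (-x)))
          - c * (Real.exp (-x) * g3 (Real.exp (-x))) := by
    intro x
    have e1 := hexpk x
    have hlog : Real.log (c * Real.exp (-(K * x)) * Real.exp (-Real.exp (-x)))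
        = Real.log c + (-(K * x)) + (-Real.exp (-x)) := by
      rw [Real.log_mul (by positivity) (Real.exp_pos _).ne', Real.log_mul hcpos.ne'
        (Real.exp_pos _).ne', Real.log_exp, Real.log_exp]
    rw [hKcast, hlog]
    simp only [hg1, hg2, hg3, Real.log_exp]
    rw [pow_succ, ← e1]
    ring
  rw [funext hpt]
  have hI1 := h1.const_mul (c * Real.log c)
  have hI2 := h2.const_mul (c * K)
  have hI3 := h3.const_mul c
  have hsub12 : Integrable (fun x : ℝ =>
      c * Real.log c * (Real.exp (-x) * g1 (Real.exp (-x)))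
        - c * K * (Real.exp (-x) * g2 (Real.exp (-x)))) := hI1.sub hI2
  rw [integral_sub hsub12 hI3, integral_sub hI1 hI2, integral_const_mul,
    integral_const_mul, integral_const_mul, ← gumbel_subst g1, ← gumbel_subst g2,
    ← gumbel_subst g3]
  have v1 : ∫ t in Ioi (0:ℝ), g1 t = (n ! : ℝ) := int_pow_exp n
  have v2 : ∫ t in Ioi (0:ℝ), g2 t
      = -((n ! : ℝ) * (-Real.eulerMascheroniConstant + (harmonic n : ℝ))) := by
    rw [hg2]
    rw [integral_neg, int_pow_exp_log n]
  have v3 : ∫ t in Ioi (0:ℝ), g3 t = ((n + 1)! : ℝ) := int_pow_exp (n + 1)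
  rw [v1, v2, v3]
  -- arithmetic cleanup
  have hharm : (harmonic n : ℝ) = ∑ i ∈ Finset.Icc 1 n, (1 : ℝ) / i := by
    rw [harmonic_eq_sum_Icc]
    push_cast
    simp [one_div]
  have hGamma : Real.Gamma (((n + 1 : ℕ) : ℝ) + 1) = ((n + 1)! : ℝ) := by
    rw [← Real.Gamma_nat_eq_factorial (n + 1)]
  have hlogc : Real.log c = -Real.log (n ! : ℝ) := by
    rw [hc, one_div, Real.log_inv]
  have hfs : ((n + 1)! : ℝ) = ((n : ℝ) + 1) * (n ! : ℝ) := by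
    rw [Nat.factorial_succ]; push_cast; ring
  rw [hGamma, hharm.symm, hlogc, hKcast, hfs, hc]
  field_simp
  ring
end
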